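/- Let ψ : ℕ → [0,1/4], let m < n be positive integers, and let I ⊆ [0,1] be any interval. There is an absolute constant C such that σ²[ λ(E_m^Q ∩ E_n^Q ∩ I) ] ≤ C p_m p_n ψ(m) ψ(n), where σ² denotes variance over the random choice of P. -/

import Mathlib

open MeasureTheory ProbabilityTheory Filter Set

noncomputable section

lemma intervalDisjoint (n : ℕ) (hn : 0 < n) (ψ : ℝ) (hψ : ψ ≤ 1/4) {b b' : ℕ} (hbb : b ≠ b') :
    Disjoint (Set.Ioo (((b:ℝ) - ψ)/n) (((b:ℝ)+ψ)/n)) (Set.Ioo (((b':ℝ) - ψ)/n) (((b':ℝ)+ψ)/n)) := by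
  rw [Set.disjoint_left]
  rintro x ⟨h1, h2⟩ ⟨h3, h4⟩
  have hn' : (0:ℝ) < n := by exact_mod_cast hn
  rw [div_lt_iff₀ hn'] at h1 h3
  rw [lt_div_iff₀ hn'] at h2 h4
  have h5 : (1:ℝ) ≤ |(b:ℝ) - b'| := by
    rcases hbb.lt_or_gt with h | h
    · have hb : (b:ℝ) + 1 ≤ b' := by exact_mod_cast h
      rw [abs_sub_comm, abs_of_nonneg (by linarith)]; linarith
    · have hb : (b':ℝ) + 1 ≤ b := by exact_mod_cast h
      rw [abs_of_nonneg (by linarith)]; linarith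
  have h6 : |(b:ℝ) - b'| < 2*ψ := abs_sub_lt_iff.2 ⟨by linarith, by linarith⟩
  linarith

open scoped Classical in
lemma measSet_filter {Ω : Type*} [MeasurableSpace Ω] (s : Finset ℕ) (Q : Ω → Set ℕ)
    (h : ∀ a, MeasurableSet {ω | a ∈ Q ω}) (T : Finset ℕ) :
    MeasurableSet {ω | Finset.filter (fun a => a ∈ Q ω) s = T} := by
  by_cases hT : T ⊆ s
  · have heq : {ω | Finset.filter (fun a => a ∈ Q ω) s = T}
        = ⋂ a ∈ (s : Set ℕ), {ω | a ∈ Q ω ↔ a ∈ T} := by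
      ext ω
      simp only [Set.mem_setOf_eq, Set.mem_iInter, Finset.ext_iff, Finset.mem_filter,
        Finset.mem_coe]
      constructor
      · intro hfa a ha
        have := hfa a
        tauto
      · intro hfa a
        constructor
        · rintro ⟨ha, hq⟩; exact (hfa a ha).1 hq
        · intro haT; exact ⟨hT haT, (hfa a (hT haT)).2 haT⟩
    rw [heq]
    refine MeasurableSet.biInter (Set.to_countable _) (fun a _ => ?_)
    by_cases haT : a ∈ T
    · have : {ω | a ∈ Q ω ↔ a ∈ T} = {ω | a ∈ Q ω} := by ext ω; simp [haT]
      rw [this]; exact h a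
    · have : {ω | a ∈ Q ω ↔ a ∈ T} = {ω | a ∈ Q ω}ᶜ := by ext ω; simp [haT]
      rw [this]; exact (h a).compl
  · have : {ω | Finset.filter (fun a => a ∈ Q ω) s = T} = ∅ := by
      ext ω
      simp only [Set.mem_setOf_eq, Set.mem_empty_iff_false, iff_false]
      intro hEq
      exact hT (hEq ▸ Finset.filter_subset _ s)
    simp [this]

/-- The approximation set `⋃_{a ∈ A} ((a-ψ(n))/n, (a+ψ(n))/n)`. -/
def approxSet (A : Set ℕ) (ψ : ℕ → ℝ) (n : ℕ) : Set ℝ :=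
  ⋃ a ∈ A, Set.Ioo (((a : ℝ) - ψ n) / n) (((a : ℝ) + ψ n) / n)

/-- The set of partially reduced numerators: `a ∈ {1,…,n}` with `gcd(a,n) ≤ (log n)^{ε/2}`. -/
def Sred (ε : ℝ) (n : ℕ) : Set ℕ :=
  {a | 1 ≤ a ∧ a ≤ n ∧ (Nat.gcd a n : ℝ) ≤ Real.log n ^ (ε / 2)}

/-- The random approximation set `E_n^Q`, with numerators in `Q_n = P_n ∩ S_n`. -/
def EQset (ε : ℝ) (P : ℕ → Set ℕ) (ψ : ℕ → ℝ) (n : ℕ) : Set ℝ :=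
  approxSet (P n ∩ Sred ε n) ψ n

/-- For `m < n` and any interval `I ⊆ [0,1]`,
`σ²[λ(E_m^Q ∩ E_n^Q ∩ I)] ≤ C pₘ pₙ ψ(m) ψ(n)` over the random choice of `P`. -/
theorem stmt11
    {Ω : Type*} [MeasurableSpace Ω] (μ : Measure Ω) [IsProbabilityMeasure μ]
    (ε : ℝ) (hε : ε ∈ Set.Ioo (0 : ℝ) 1)
    (p : ℕ → ℝ) (hp : ∀ n, p n ∈ Set.Icc (0 : ℝ) 1)
    (P : Ω → ℕ → Set ℕ)
    (hPsub : ∀ ω n, P ω n ⊆ Set.Icc 1 n)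
    (hPmeas : ∀ n a : ℕ, MeasurableSet {ω | a ∈ P ω n})
    (hPprob : ∀ n a : ℕ, 1 ≤ a → a ≤ n → μ {ω | a ∈ P ω n} = ENNReal.ofReal (p n))
    (hPindep : iIndepSet (fun q : ℕ × ℕ => {ω | q.2 ∈ P ω q.1}) μ) :
    ∃ C > (0 : ℝ), ∀ ψ : ℕ → ℝ, (∀ k, ψ k ∈ Set.Icc (0 : ℝ) (1 / 4)) →
      ∀ m n : ℕ, 0 < m → m < n →
      ∀ I : Set ℝ, I.OrdConnected → I ⊆ Set.Icc (0 : ℝ) 1 →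
        variance (fun ω => (volume (EQset ε (P ω) ψ m ∩ EQset ε (P ω) ψ n ∩ I)).toReal) μ
          ≤ C * (p m * p n * ψ m * ψ n) := by
  classical
  refine ⟨4, by norm_num, ?_⟩
  intro ψ hψ m n hm0 hmn I hIconn hIsub
  have hn0 : 0 < n := hm0.trans hmn
  have hm' : (0:ℝ) < m := by exact_mod_cast hm0
  have hn' : (0:ℝ) < n := by exact_mod_cast hn0
  obtain ⟨hψm0, hψm4⟩ := hψ m
  obtain ⟨hψn0, hψn4⟩ := hψ n
  obtain ⟨hpm0, hpm1⟩ := hp m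
  obtain ⟨hpn0, hpn1⟩ := hp n
  set s : Finset ℕ := Finset.Icc 1 m with hs
  set t : Finset ℕ := Finset.Icc 1 n with ht
  set Ia : ℕ → Set ℝ := fun a => Set.Ioo (((a:ℝ) - ψ m)/m) (((a:ℝ) + ψ m)/m) with hIa
  set Jb : ℕ → Set ℝ := fun b => Set.Ioo (((b:ℝ) - ψ n)/n) (((b:ℝ) + ψ n)/n) with hJb
  set A : ℕ → Set Ω := fun a => {ω | a ∈ P ω m} with hA
  set B : ℕ → Set Ω := fun b => {ω | b ∈ P ω n} with hB
  set c : ℕ → ℕ → ℝ := fun a b => (volume (Ia a ∩ Jb b)).toReal with hc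
  set X : Ω → ℝ := fun ω => (volume (EQset ε (P ω) ψ m ∩ EQset ε (P ω) ψ n ∩ I)).toReal with hX
  have hc_nonneg : ∀ a b, 0 ≤ c a b := fun a b => ENNReal.toReal_nonneg
  have hIa_vol : ∀ a : ℕ, volume (Ia a) = ENNReal.ofReal (2 * ψ m / m) := by
    intro a
    rw [hIa]
    simp only [Real.volume_Ioo]
    congr 1
    ring
  have hJb_vol : ∀ b : ℕ, volume (Jb b) = ENNReal.ofReal (2 * ψ n / n) := by
    intro b
    rw [hJb]
    simp only [Real.volume_Ioo]
    congr 1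
    ring
  -- measurability of X
  have hXmeas : Measurable X := by
    letI : MeasurableSpace (Finset ℕ × Finset ℕ) := ⊤
    have hcomp : X = (fun TU : Finset ℕ × Finset ℕ =>
        (volume (approxSet ((↑TU.1 : Set ℕ) ∩ Sred ε m) ψ m ∩
          approxSet ((↑TU.2 : Set ℕ) ∩ Sred ε n) ψ n ∩ I)).toReal)
        ∘ (fun ω => (Finset.filter (fun a => a ∈ P ω m) s,
                     Finset.filter (fun b => b ∈ P ω n) t)) := by
      funext ω
      simp only [Function.comp_apply, hX]
      have e1 : (↑(Finset.filter (fun a => a ∈ P ω m) s) : Set ℕ) ∩ Sred ε m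
          = P ω m ∩ Sred ε m := by
        ext a
        simp only [Finset.coe_filter, hs, Finset.mem_Icc, Set.mem_inter_iff, Set.mem_setOf_eq,
          Sred]
        tauto
      have e2 : (↑(Finset.filter (fun b => b ∈ P ω n) t) : Set ℕ) ∩ Sred ε n
          = P ω n ∩ Sred ε n := by
        ext b
        simp only [Finset.coe_filter, ht, Finset.mem_Icc, Set.mem_inter_iff, Set.mem_setOf_eq,
          Sred]
        tauto
      rw [EQset, EQset, e1, e2]
    rw [hcomp]
    refine measurable_from_top.comp (measurable_to_countable' fun TU => ?_)
    have hpre : (fun ω => (Finset.filter (fun a => a ∈ P ω m) s,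
          Finset.filter (fun b => b ∈ P ω n) t)) ⁻¹' {TU}
        = {ω | Finset.filter (fun a => a ∈ P ω m) s = TU.1} ∩
          {ω | Finset.filter (fun b => b ∈ P ω n) t = TU.2} := by
      ext ω; simp [Prod.ext_iff]
    rw [hpre]
    exact (measSet_filter s _ (hPmeas m) TU.1).inter (measSet_filter t _ (hPmeas n) TU.2)
  -- boundedness of X
  have hXfin : ∀ ω, volume (EQset ε (P ω) ψ m ∩ EQset ε (P ω) ψ n ∩ I) ≤ 1 := by
    intro ω
    calc volume (EQset ε (P ω) ψ m ∩ EQset ε (P ω) ψ n ∩ I)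
        ≤ volume (Set.Icc (0:ℝ) 1) := measure_mono (fun x hx => hIsub hx.2)
      _ = 1 := by simp [Real.volume_Icc]
  have hXle : ∀ ω, X ω ≤ 1 := by
    intro ω
    rw [hX]
    have h1 : volume (EQset ε (P ω) ψ m ∩ EQset ε (P ω) ψ n ∩ I) ≤ ENNReal.ofReal 1 := by
      rw [ENNReal.ofReal_one]; exact hXfin ω
    exact ENNReal.toReal_le_of_le_ofReal one_pos.le h1
  have hX2 : MemLp X 2 μ := by
    refine MemLp.of_bound hXmeas.aestronglyMeasurable 1 (ae_of_all _ fun ω => ?_)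
    rw [Real.norm_eq_abs, abs_of_nonneg ENNReal.toReal_nonneg]
    exact hXle ω
  have hvar : variance X μ ≤ μ[X ^ 2] := by
    rw [variance_eq_sub hX2]
    have := sq_nonneg (μ[X])
    linarith
  -- the indicator-sum majorant
  set g : Ω → ℝ := fun ω => ∑ q ∈ s ×ˢ t, Set.indicator (A q.1 ∩ B q.2) (fun _ => c q.1 q.2) ω
    with hg
  have hXg : ∀ ω, X ω ≤ g ω := by
    intro ω
    set D : ℕ × ℕ → Set ℝ := fun q =>
      if q.1 ∈ P ω m ∧ q.2 ∈ P ω n then Ia q.1 ∩ Jb q.2 else ∅ with hD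
    have hsub : EQset ε (P ω) ψ m ∩ EQset ε (P ω) ψ n ∩ I ⊆ ⋃ q ∈ s ×ˢ t, D q := by
      rintro x ⟨⟨hx1, hx2⟩, _⟩
      rw [EQset, approxSet, Set.mem_iUnion₂] at hx1 hx2
      obtain ⟨a, ⟨haP, haS⟩, hxa⟩ := hx1
      obtain ⟨b, ⟨hbP, hbS⟩, hxb⟩ := hx2
      refine Set.mem_biUnion (?_ : ((a, b) : ℕ × ℕ) ∈ s ×ˢ t) ?_
      · rw [Finset.mem_product]
        exact ⟨by rw [hs]; exact Finset.mem_Icc.2 ⟨haS.1, haS.2.1⟩,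
               by rw [ht]; exact Finset.mem_Icc.2 ⟨hbS.1, hbS.2.1⟩⟩
      · rw [hD]
        simp only [if_pos (⟨haP, hbP⟩ : a ∈ P ω m ∧ b ∈ P ω n)]
        exact ⟨hxa, hxb⟩
    have hDfin : ∀ q ∈ s ×ˢ t, volume (D q) ≠ ⊤ := by
      intro q _
      simp only [hD]
      split_ifs
      · exact ne_top_of_le_ne_top (by simp [hIa_vol q.1])
          (measure_mono Set.inter_subset_left)
      · simp
    have h2 : volume (EQset ε (P ω) ψ m ∩ EQset ε (P ω) ψ n ∩ I)
        ≤ ∑ q ∈ s ×ˢ t, volume (D q) :=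
      (measure_mono hsub).trans (measure_biUnion_finset_le _ _)
    have h3 : X ω ≤ (∑ q ∈ s ×ˢ t, volume (D q)).toReal := by
      rw [hX]
      exact ENNReal.toReal_mono (by
        exact (ENNReal.sum_lt_top.2 (fun q hq => lt_top_iff_ne_top.2 (hDfin q hq))).ne) h2
    refine h3.trans ?_
    rw [ENNReal.toReal_sum (fun q hq => hDfin q hq), hg]
    refine le_of_eq (Finset.sum_congr rfl fun q hq => ?_)
    simp only [hD]
    by_cases hq' : q.1 ∈ P ω m ∧ q.2 ∈ P ω n
    · have hmem : ω ∈ A q.1 ∩ B q.2 := ⟨hq'.1, hq'.2⟩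
      simp [if_pos hq', Set.indicator_of_mem hmem, hc]
    · have hmem : ω ∉ A q.1 ∩ B q.2 := fun h => hq' ⟨h.1, h.2⟩
      simp [if_neg hq', Set.indicator_of_notMem hmem]
  set G : Ω → ℝ := fun ω => ∑ q ∈ s ×ˢ t, ∑ r ∈ s ×ˢ t,
      Set.indicator (A q.1 ∩ B q.2) (fun _ => c q.1 q.2 * c r.1 r.2) ω with hG
  have hg2 : ∀ ω, g ω ^ 2 ≤ G ω := by
    intro ω
    rw [hg, hG, sq, Finset.sum_mul_sum]
    refine Finset.sum_le_sum fun q hq => Finset.sum_le_sum fun r hr => ?_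
    simp only [Set.indicator_apply]
    split_ifs <;> nlinarith [hc_nonneg q.1 q.2, hc_nonneg r.1 r.2]
  have hABmeas : ∀ a b : ℕ, MeasurableSet (A a ∩ B b) := fun a b =>
    (hPmeas m a).inter (hPmeas n b)
  have hGint : Integrable G μ := by
    refine integrable_finset_sum _ fun q _ => integrable_finset_sum _ fun r _ => ?_
    exact (integrable_const _).indicator (hABmeas q.1 q.2)
  have hXG : μ[X ^ 2] ≤ μ[G] := by
    refine integral_mono hX2.integrable_sq hGint fun ω => ?_
    calc (X ^ 2) ω = X ω ^ 2 := rfl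
      _ ≤ g ω ^ 2 := pow_le_pow_left₀ ENNReal.toReal_nonneg (hXg ω) 2
      _ ≤ G ω := hg2 ω
  -- independence: μ (A a ∩ B b) = p m * p n
  have key : ∀ a ∈ s, ∀ b ∈ t, (μ (A a ∩ B b)).toReal = p m * p n := by
    intro a ha b hb
    rw [hs, Finset.mem_Icc] at ha
    rw [ht, Finset.mem_Icc] at hb
    have hne : ((m, a) : ℕ × ℕ) ≠ (n, b) := by
      intro h
      exact (Nat.ne_of_lt hmn) (congrArg Prod.fst h)
    have hnotmem : ((m, a) : ℕ × ℕ) ∉ ({(n, b)} : Finset (ℕ × ℕ)) := by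
      simp [hne]
    have hii := hPindep.meas_biInter ({(m, a), (n, b)} : Finset (ℕ × ℕ))
    rw [Finset.set_biInter_insert, Finset.set_biInter_singleton,
      Finset.prod_insert hnotmem, Finset.prod_singleton] at hii
    have hii2 : μ ({ω | a ∈ P ω m} ∩ {ω | b ∈ P ω n})
        = ENNReal.ofReal (p m) * ENNReal.ofReal (p n) := by
      rw [hii, hPprob m a ha.1 ha.2, hPprob n b hb.1 hb.2]
    rw [show A a ∩ B b = {ω | a ∈ P ω m} ∩ {ω | b ∈ P ω n} from rfl, hii2,
      ENNReal.toReal_mul, ENNReal.toReal_ofReal hpm0, ENNReal.toReal_ofReal hpn0]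
  set S : ℝ := ∑ q ∈ s ×ˢ t, c q.1 q.2 with hS
  have hGval : μ[G] = (p m * p n) * (S * S) := by
    have step : μ[G] = ∑ q ∈ s ×ˢ t, ∑ r ∈ s ×ˢ t,
        (p m * p n) * (c q.1 q.2 * c r.1 r.2) := by
      rw [hG, integral_finset_sum _ (fun q _ =>
        integrable_finset_sum _ fun r _ => (integrable_const _).indicator (hABmeas q.1 q.2))]
      refine Finset.sum_congr rfl fun q hq => ?_
      rw [integral_finset_sum _ (fun r _ => (integrable_const _).indicator (hABmeas q.1 q.2))]
      refine Finset.sum_congr rfl fun r hr => ?_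
      rw [integral_indicator_const _ (hABmeas q.1 q.2), smul_eq_mul, measureReal_def,
        key q.1 (Finset.mem_product.1 hq).1 q.2 (Finset.mem_product.1 hq).2]
    rw [step, hS, Finset.sum_mul_sum, Finset.mul_sum]
    refine Finset.sum_congr rfl fun q _ => ?_
    rw [Finset.mul_sum]
  have hS_nonneg : 0 ≤ S := Finset.sum_nonneg fun q _ => hc_nonneg _ _
  have hIaJb_fin : ∀ a b : ℕ, volume (Ia a ∩ Jb b) ≠ ⊤ := fun a b =>
    ne_top_of_le_ne_top (by simp [hIa_vol a]) (measure_mono Set.inter_subset_left)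
  have hSm : S ≤ 2 * ψ m := by
    have inner : ∀ a : ℕ, ∑ b ∈ t, c a b ≤ 2 * ψ m / m := by
      intro a
      have hdisj : (↑t : Set ℕ).PairwiseDisjoint (fun b => Ia a ∩ Jb b) := fun b _ b' _ hbb =>
        (intervalDisjoint n hn0 (ψ n) hψn4 hbb).mono Set.inter_subset_right
          Set.inter_subset_right
      have heq : ∑ b ∈ t, volume (Ia a ∩ Jb b) = volume (⋃ b ∈ t, Ia a ∩ Jb b) :=
        (measure_biUnion_finset hdisj (fun b _ => measurableSet_Ioo.inter measurableSet_Ioo)).symm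
      have hle : ∑ b ∈ t, volume (Ia a ∩ Jb b) ≤ volume (Ia a) := by
        rw [heq]
        exact measure_mono (Set.iUnion₂_subset fun b _ => Set.inter_subset_left)
      calc ∑ b ∈ t, c a b = (∑ b ∈ t, volume (Ia a ∩ Jb b)).toReal :=
            (ENNReal.toReal_sum fun b _ => hIaJb_fin a b).symm
        _ ≤ (volume (Ia a)).toReal := ENNReal.toReal_mono (by simp [hIa_vol a]) hle
        _ = 2 * ψ m / m := by rw [hIa_vol a, ENNReal.toReal_ofReal (by positivity)]
    rw [hS, Finset.sum_product]
    calc ∑ a ∈ s, ∑ b ∈ t, c a b ≤ ∑ _a ∈ s, (2 * ψ m / m) :=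
          Finset.sum_le_sum fun a _ => inner a
      _ = m * (2 * ψ m / m) := by
          rw [Finset.sum_const, hs, Nat.card_Icc, nsmul_eq_mul]
          norm_num
      _ = 2 * ψ m := by field_simp
  have hSn : S ≤ 2 * ψ n := by
    have inner : ∀ b : ℕ, ∑ a ∈ s, c a b ≤ 2 * ψ n / n := by
      intro b
      have hdisj : (↑s : Set ℕ).PairwiseDisjoint (fun a => Ia a ∩ Jb b) := fun a _ a' _ haa =>
        (intervalDisjoint m hm0 (ψ m) hψm4 haa).mono Set.inter_subset_left
          Set.inter_subset_left
      have heq : ∑ a ∈ s, volume (Ia a ∩ Jb b) = volume (⋃ a ∈ s, Ia a ∩ Jb b) :=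
        (measure_biUnion_finset hdisj (fun a _ => measurableSet_Ioo.inter measurableSet_Ioo)).symm
      have hle : ∑ a ∈ s, volume (Ia a ∩ Jb b) ≤ volume (Jb b) := by
        rw [heq]
        exact measure_mono (Set.iUnion₂_subset fun a _ => Set.inter_subset_right)
      calc ∑ a ∈ s, c a b = (∑ a ∈ s, volume (Ia a ∩ Jb b)).toReal :=
            (ENNReal.toReal_sum fun a _ => hIaJb_fin a b).symm
        _ ≤ (volume (Jb b)).toReal := ENNReal.toReal_mono (by simp [hJb_vol b]) hle
        _ = 2 * ψ n / n := by rw [hJb_vol b, ENNReal.toReal_ofReal (by positivity)]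
    rw [hS, Finset.sum_product, Finset.sum_comm]
    calc ∑ b ∈ t, ∑ a ∈ s, c a b ≤ ∑ _b ∈ t, (2 * ψ n / n) :=
          Finset.sum_le_sum fun b _ => inner b
      _ = n * (2 * ψ n / n) := by
          rw [Finset.sum_const, ht, Nat.card_Icc, nsmul_eq_mul]
          norm_num
      _ = 2 * ψ n := by field_simp
  calc variance X μ ≤ μ[X ^ 2] := hvar
    _ ≤ μ[G] := hXG
    _ = (p m * p n) * (S * S) := hGval
    _ ≤ (p m * p n) * ((2 * ψ m) * (2 * ψ n)) := by
        refine mul_le_mul_of_nonneg_left ?_ (by positivity)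
        exact mul_le_mul hSm hSn hS_nonneg (by positivity)
    _ = 4 * (p m * p n * ψ m * ψ n) := by ring
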